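/- Let X be a metric space, μ a probability measure on X, f : X → Y a measurable deterministic labeling function, L ⊆ X a finite nonempty labeled set, nn : X → L a nearest-neighbor selector (dist(x, nn(x)) ≤ dist(x, x') for all x' ∈ L), and f̂ = f ∘ nn the 1-NN classifier. For δ > 0, assuming the relevant sets are μ-measurable, μ({x : f(x) ≠ f̂(x)}) ≤ (1 − μ({x : ∃ x' ∈ L, dist(x, x') ≤ δ})) + (1 − μ({x : ∀ x' with dist(x, x') ≤ δ, f(x') = f(x)})), i.e. the 1-NN error is at most (1 − coverage) + (1 − purity). -/

import Mathlib

open MeasureTheory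

/-- ProbCover's bound (equation (1) of the paper): the 1-NN error is at most
`(1 - coverage) + (1 - purity)`. -/
theorem probcover_bound
    {X Y : Type*} [MetricSpace X] [MeasurableSpace X]
    (μ : Measure X) [IsProbabilityMeasure μ]
    (f : X → Y)
    (L : Finset X) (hL : L.Nonempty)
    (nn : X → X) (hnn_mem : ∀ x, nn x ∈ L)
    (hnn_near : ∀ x, ∀ x' ∈ L, dist x (nn x) ≤ dist x x')
    (δ : ℝ) (hδ : 0 < δ)
    (herr : MeasurableSet {x | f x ≠ f (nn x)})
    (hcov : MeasurableSet {x | ∃ x' ∈ L, dist x x' ≤ δ})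
    (hpur : MeasurableSet {x | ∀ x', dist x x' ≤ δ → f x' = f x}) :
    (μ {x | f x ≠ f (nn x)}).toReal ≤
      (1 - (μ {x | ∃ x' ∈ L, dist x x' ≤ δ}).toReal)
        + (1 - (μ {x | ∀ x', dist x x' ≤ δ → f x' = f x}).toReal) := by
  set C := {x | ∃ x' ∈ L, dist x x' ≤ δ} with hC
  set P := {x | ∀ x', dist x x' ≤ δ → f x' = f x} with hP
  have hsub : {x | f x ≠ f (nn x)} ⊆ Cᶜ ∪ Pᶜ := by
    intro x hx
    by_contra h
    simp only [Set.mem_union, Set.mem_compl_iff, not_or, not_not] at h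
    obtain ⟨hxC, hxP⟩ := h
    obtain ⟨x', hx'L, hx'd⟩ := hxC
    have hd : dist x (nn x) ≤ δ := le_trans (hnn_near x x' hx'L) hx'd
    exact hx (hxP (nn x) hd).symm
  have h1 : μ {x | f x ≠ f (nn x)} ≤ μ Cᶜ + μ Pᶜ :=
    le_trans (measure_mono hsub) (measure_union_le _ _)
  have hCc : μ Cᶜ = 1 - μ C := by
    rw [measure_compl hcov (measure_ne_top μ _), measure_univ]
  have hPc : μ Pᶜ = 1 - μ P := by
    rw [measure_compl hpur (measure_ne_top μ _), measure_univ]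
  have hCle : μ C ≤ 1 := prob_le_one
  have hPle : μ P ≤ 1 := prob_le_one
  have := ENNReal.toReal_mono (by
      rw [hCc, hPc]
      exact ENNReal.add_ne_top.mpr ⟨(tsub_le_self.trans_lt ENNReal.one_lt_top).ne,
        (tsub_le_self.trans_lt ENNReal.one_lt_top).ne⟩) h1
  refine this.trans ?_
  rw [hCc, hPc, ENNReal.toReal_add, ENNReal.toReal_sub_of_le hCle ENNReal.one_ne_top,
    ENNReal.toReal_sub_of_le hPle ENNReal.one_ne_top, ENNReal.toReal_one]
  · exact (tsub_le_self.trans_lt ENNReal.one_lt_top).ne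
  · exact (tsub_le_self.trans_lt ENNReal.one_lt_top).ne
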